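/- Strong maximum principle: assume β vanishes for a ≥ a₂ with ∫_a^{a₂} β̲(l) dl > 0 for all a ∈ [0,a₂), and that 𝒜 possesses a principal eigenvalue λ₁(𝒜) < 0 with positive eigenfunction. Then any u ∈ W^{1,1}((0,a₂), C(Ω̄)) with u ≢ 0 satisfying ∂_a u − D(K−I)u + μu ≥ 0 on (0,a₂)×Ω and u(0,x) ≥ ∫_0^{a₂} β(a,x)u(a,x)da must be strictly positive on [0,a₂] × Ω. -/

import Mathlib

open MeasureTheory

section StrongMaxAux

open Set Filter Topology


/-- At a zero of a nonnegative function which is an interior-or-right endpoint,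
the derivative is nonpositive. -/
lemma aux_left_deriv_nonpos {f : ℝ → ℝ} {f' a₀ a₂ : ℝ} (hd : HasDerivAt f f' a₀)
    (h0 : 0 < a₀) (ha : a₀ ≤ a₂) (hf : ∀ a ∈ Set.Icc (0:ℝ) a₂, 0 ≤ f a)
    (hz : f a₀ = 0) : f' ≤ 0 := by
  have hslope := hasDerivAt_iff_tendsto_slope.1 hd
  have h1 : Tendsto (slope f a₀) (𝓝[<] a₀) (𝓝 f') :=
    hslope.mono_left (nhdsWithin_mono _ (fun x hx => ne_of_lt hx))
  refine le_of_tendsto h1 ?_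
  filter_upwards [Ioo_mem_nhdsLT_of_mem (show a₀ ∈ Set.Ioc 0 a₀ from ⟨h0, le_rfl⟩)] with a ha'
  have hfa : 0 ≤ f a := hf a ⟨le_of_lt ha'.1, le_trans (le_of_lt ha'.2) ha⟩
  rw [slope_def_field, hz]
  have h2 : a - a₀ ≤ 0 := by linarith [ha'.2]
  have h3 : 0 ≤ f a - 0 := by linarith
  exact div_nonpos_of_nonneg_of_nonpos h3 h2

/-- Monotonicity from everywhere (two-sided) derivatives that are nonnegative. -/
lemma aux_mono {f g : ℝ → ℝ} {s t : ℝ}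
    (hd : ∀ a ∈ Set.Icc s t, HasDerivAt f (g a) a)
    (hg : ∀ a ∈ Set.Icc s t, 0 ≤ g a) : MonotoneOn f (Set.Icc s t) := by
  apply monotoneOn_of_deriv_nonneg (convex_Icc s t)
  · exact fun a ha => (hd a ha).continuousAt.continuousWithinAt
  · exact fun a ha =>
      ((hd a (interior_subset ha)).differentiableAt).differentiableWithinAt
  · intro a ha
    rw [(hd a (interior_subset ha)).deriv]
    exact hg a (interior_subset ha)

lemma aux_integrable_of_pos {f : ℝ → ℝ} {s : Set ℝ}
    (h : (∫ a in s, f a) ≠ 0) : IntegrableOn f s := by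
  by_contra h'; exact h (integral_undef h')

/-- product of an integrable nonneg function on `Ioc s t` with a continuous function. -/
lemma aux_int_mul {c v : ℝ → ℝ} {s t : ℝ} (hst : s < t)
    (hci : IntegrableOn c (Set.Ioc s t)) (hc : ∀ a, 0 ≤ c a)
    (hvc : ContinuousOn v (Set.Icc s t)) :
    IntegrableOn (fun a => c a * v a) (Set.Ioc s t) := by
  obtain ⟨M, hM⟩ : ∃ M, ∀ a ∈ Set.Icc s t, |v a| ≤ M := by
    obtain ⟨p, hp, hpmax⟩ := (isCompact_Icc).exists_isMaxOn (Set.nonempty_Icc.2 hst.le) hvc.abs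
    exact ⟨|v p|, fun a ha => hpmax ha⟩
  have haesm : AEStronglyMeasurable (fun a => c a * v a) (volume.restrict (Set.Ioc s t)) :=
    hci.aestronglyMeasurable.mul
      ((hvc.mono Set.Ioc_subset_Icc_self).aestronglyMeasurable measurableSet_Ioc)
  refine (hci.mul_const M).mono' haesm ?_
  rw [ae_restrict_iff' measurableSet_Ioc]
  refine ae_of_all _ fun a ha => ?_
  have : ‖c a * v a‖ = c a * |v a| := by
    rw [Real.norm_eq_abs, abs_mul, abs_of_nonneg (hc a)]
  rw [this]
  exact mul_le_mul_of_nonneg_left (hM a (Set.Ioc_subset_Icc_self ha)) (hc a)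

/-- positivity of `∫ c·v` when `∫ c > 0` and `v > 0`. -/
lemma aux_int_pos {c v : ℝ → ℝ} {s t : ℝ} (hst : s < t)
    (hc : ∀ a, 0 ≤ c a) (hpos : 0 < ∫ a in Set.Ioc s t, c a)
    (hv : ∀ a ∈ Set.Ioc s t, 0 < v a)
    (hvc : ContinuousOn v (Set.Icc s t)) :
    0 < ∫ a in Set.Ioc s t, c a * v a := by
  have hci : IntegrableOn c (Set.Ioc s t) := aux_integrable_of_pos (ne_of_gt hpos)
  have hint := aux_int_mul hst hci hc hvc
  have h1 : 0 < (volume.restrict (Set.Ioc s t)) (Function.support c) :=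
    (integral_pos_iff_support_of_nonneg hc hci).1 hpos
  refine (integral_pos_iff_support_of_nonneg_ae ?_ hint).2 ?_
  · rw [EventuallyLE, ae_restrict_iff' measurableSet_Ioc]
    exact ae_of_all _ fun a ha => mul_nonneg (hc a) (hv a ha).le
  · rw [Measure.restrict_apply' measurableSet_Ioc] at h1 ⊢
    refine lt_of_lt_of_le h1 (measure_mono ?_)
    intro a ⟨hsupp, haIoc⟩
    refine ⟨?_, haIoc⟩
    have hca : c a ≠ 0 := hsupp
    have : c a * v a ≠ 0 := mul_ne_zero hca (ne_of_gt (hv a haIoc))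
    exact this

/-- integrability on a bounded open set of a function continuous on the closure. -/
lemma aux_integrableOn {N : ℕ} {Ω : Set (EuclideanSpace ℝ (Fin N))}
    (hΩb : Bornology.IsBounded Ω) {g : EuclideanSpace ℝ (Fin N) → ℝ}
    (hg : ContinuousOn g (closure Ω)) : IntegrableOn g Ω := by
  have hcpt : IsCompact (closure Ω) :=
    Metric.isCompact_of_isClosed_isBounded isClosed_closure hΩb.closure
  exact (hg.integrableOn_compact hcpt).mono_set subset_closure

end StrongMaxAux

open Topology in
set_option maxHeartbeats 4000000 in
/-- Strong maximum principle: if `𝒜` has a principal eigenvalue `λ₁ < 0` with strictly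
positive eigenfunction `φ`, then any nonzero supersolution `u` (i.e.
`∂_a u - D(K-I)u + μu ≥ 0` with `u(0,·) ≥ ∫_0^{a₂} β(a,·) u(a,·) da`) is strictly
positive on `[0,a₂] × Ω`. -/
theorem stmt_19 {N : ℕ}
    (Ω : Set (EuclideanSpace ℝ (Fin N))) (hΩo : IsOpen Ω)
    (hΩb : Bornology.IsBounded Ω) (hΩconn : IsConnected Ω)
    (J : EuclideanSpace ℝ (Fin N) → ℝ) (hJc : Continuous J) (hJnn : ∀ z, 0 ≤ J z)
    (hJ0 : 0 < J 0) (r : ℝ) (hr : 0 < r)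
    (hJsupp : ∀ z, r ≤ ‖z‖ → J z = 0)
    (a₂ D : ℝ) (ha₂ : 0 < a₂) (hD : 0 < D)
    (β μ : ℝ → EuclideanSpace ℝ (Fin N) → ℝ)
    (hβnn : ∀ a x, 0 ≤ β a x) (hμnn : ∀ a x, 0 ≤ μ a x)
    -- Assumption: β vanishes for a ≥ a₂, and ∫_a^{a₂} β̲ > 0 for all a ∈ [0,a₂):
    (hβsupp : ∀ a : ℝ, a₂ ≤ a → ∀ x, β a x = 0)
    (βlow : ℝ → ℝ) (hβlownn : ∀ a, 0 ≤ βlow a)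
    (hβlow : ∀ a : ℝ, ∀ x ∈ closure Ω, βlow a ≤ β a x)
    (hβlowpos : ∀ a ∈ Set.Ico (0:ℝ) a₂, 0 < ∫ l in Set.Ioc a a₂, βlow l)
    -- principal eigenpair with λ₁ < 0:
    (lam₁ : ℝ) (hlam₁ : lam₁ < 0)
    (φ : ℝ → EuclideanSpace ℝ (Fin N) → ℝ)
    (hφcont : ContinuousOn (fun p : ℝ × EuclideanSpace ℝ (Fin N) => φ p.1 p.2)
      (Set.Icc 0 a₂ ×ˢ closure Ω))
    (hφpos : ∀ a ∈ Set.Icc (0:ℝ) a₂, ∀ x ∈ closure Ω, 0 < φ a x)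
    (hφeig : ∀ x ∈ closure Ω, ∀ a ∈ Set.Icc (0:ℝ) a₂,
      HasDerivAt (fun t => φ t x)
        (D * ((∫ y in Ω, J (x - y) * φ a y) - φ a x) - μ a x * φ a x -
          lam₁ * φ a x) a)
    (hφbc : ∀ x ∈ closure Ω, φ 0 x = ∫ a in Set.Ioc (0:ℝ) a₂, β a x * φ a x)
    -- the supersolution u:
    (u u' : ℝ → EuclideanSpace ℝ (Fin N) → ℝ)
    (hucont : ContinuousOn (fun p : ℝ × EuclideanSpace ℝ (Fin N) => u p.1 p.2)
      (Set.Icc 0 a₂ ×ˢ closure Ω))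
    (hud : ∀ x ∈ closure Ω, ∀ a ∈ Set.Icc (0:ℝ) a₂,
      HasDerivAt (fun t => u t x) (u' a x) a)
    (hsuper : ∀ a ∈ Set.Icc (0:ℝ) a₂, ∀ x ∈ closure Ω,
      0 ≤ u' a x - D * ((∫ y in Ω, J (x - y) * u a y) - u a x) + μ a x * u a x)
    (hubc : ∀ x ∈ closure Ω,
      (∫ a in Set.Ioc (0:ℝ) a₂, β a x * u a x) ≤ u 0 x)
    (hune : ∃ a ∈ Set.Icc (0:ℝ) a₂, ∃ x ∈ Ω, u a x ≠ 0) :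
    ∀ a ∈ Set.Icc (0:ℝ) a₂, ∀ x ∈ Ω, 0 < u a x := by
  classical
  have hΩsub : Ω ⊆ closure Ω := subset_closure
  have hΩm : MeasurableSet Ω := hΩo.measurableSet
  have hΩcc : IsCompact (closure Ω) :=
    Metric.isCompact_of_isClosed_isBounded isClosed_closure hΩb.closure
  obtain ⟨astar, hastar, xstar, hxstarΩ, hustar_ne⟩ := hune
  have hKne : (Set.Icc (0:ℝ) a₂ ×ˢ closure Ω).Nonempty :=
    ⟨(0, xstar), ⟨⟨le_rfl, ha₂.le⟩, hΩsub hxstarΩ⟩⟩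
  have hKcpt : IsCompact (Set.Icc (0:ℝ) a₂ ×ˢ closure Ω) := (isCompact_Icc).prod hΩcc
  -- slices
  have huslice : ∀ x ∈ closure Ω, ContinuousOn (fun a => u a x) (Set.Icc (0:ℝ) a₂) := by
    intro x hx
    exact hucont.comp ((continuous_id.prodMk continuous_const).continuousOn)
      (fun a ha => ⟨ha, hx⟩)
  have hφslice : ∀ x ∈ closure Ω, ContinuousOn (fun a => φ a x) (Set.Icc (0:ℝ) a₂) := by
    intro x hx
    exact hφcont.comp ((continuous_id.prodMk continuous_const).continuousOn)
      (fun a ha => ⟨ha, hx⟩)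
  have huspace : ∀ a ∈ Set.Icc (0:ℝ) a₂, ContinuousOn (fun y => u a y) (closure Ω) := by
    intro a ha
    exact hucont.comp ((continuous_const.prodMk continuous_id).continuousOn)
      (fun y hy => ⟨ha, hy⟩)
  have hφspace : ∀ a ∈ Set.Icc (0:ℝ) a₂, ContinuousOn (fun y => φ a y) (closure Ω) := by
    intro a ha
    exact hφcont.comp ((continuous_const.prodMk continuous_id).continuousOn)
      (fun y hy => ⟨ha, hy⟩)
  -- bounds on φ and u
  obtain ⟨pm, hpmK, hpmmin⟩ := hKcpt.exists_isMinOn hKne hφcont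
  set c₀ := φ pm.1 pm.2 with hc₀def
  have hc₀pos : 0 < c₀ := hφpos _ hpmK.1 _ hpmK.2
  have hc₀le : ∀ a ∈ Set.Icc (0:ℝ) a₂, ∀ x ∈ closure Ω, c₀ ≤ φ a x := by
    intro a ha x hx
    exact hpmmin (show ((a,x) : ℝ × EuclideanSpace ℝ (Fin N)) ∈ _ from ⟨ha, hx⟩)
  obtain ⟨pM, hpMK, hpMmax⟩ := hKcpt.exists_isMaxOn hKne hφcont
  set Mφ := φ pM.1 pM.2 with hMφdef
  have hMφ : ∀ a ∈ Set.Icc (0:ℝ) a₂, ∀ x ∈ closure Ω, φ a x ≤ Mφ := by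
    intro a ha x hx
    exact hpMmax (show ((a,x) : ℝ × EuclideanSpace ℝ (Fin N)) ∈ _ from ⟨ha, hx⟩)
  have hMφpos : 0 < Mφ := lt_of_lt_of_le hc₀pos (hc₀le _ hpMK.1 _ hpMK.2)
  obtain ⟨pu, hpuK, hpumax⟩ := hKcpt.exists_isMaxOn hKne hucont.abs
  set Mu := |u pu.1 pu.2| with hMudef
  have hMu : ∀ a ∈ Set.Icc (0:ℝ) a₂, ∀ x ∈ closure Ω, |u a x| ≤ Mu := by
    intro a ha x hx
    exact hpumax (show ((a,x) : ℝ × EuclideanSpace ℝ (Fin N)) ∈ _ from ⟨ha, hx⟩)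
  have hMu0 : 0 ≤ Mu := abs_nonneg _
  -- bound on J
  obtain ⟨zJ, hzJ, hzJmax⟩ := (isCompact_closedBall (0:EuclideanSpace ℝ (Fin N)) r).exists_isMaxOn
    ⟨0, Metric.mem_closedBall_self hr.le⟩ hJc.continuousOn
  set MJ := J zJ with hMJdef
  have hMJ : ∀ z, J z ≤ MJ := by
    intro z
    by_cases hz : z ∈ Metric.closedBall (0:EuclideanSpace ℝ (Fin N)) r
    · exact hzJmax hz
    · rw [hJsupp z ?_]
      · exact le_trans hJ0.le (hzJmax (Metric.mem_closedBall_self hr.le))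
      · simp only [Metric.mem_closedBall, dist_zero_right, not_le] at hz
        exact hz.le
  have hMJ0 : 0 < MJ := lt_of_lt_of_le hJ0 (hMJ 0)
  have hvolΩ : volume Ω ≠ ⊤ :=
    ne_of_lt (lt_of_le_of_lt (measure_mono hΩsub) hΩcc.measure_lt_top)
  -- integrability of the kernel integrands
  have hKφint : ∀ a ∈ Set.Icc (0:ℝ) a₂, ∀ x : EuclideanSpace ℝ (Fin N),
      IntegrableOn (fun y => J (x - y) * φ a y) Ω := fun a ha x =>
    aux_integrableOn hΩb
      (((hJc.comp (continuous_const.sub continuous_id)).continuousOn).mul (hφspace a ha))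
  have hKuint : ∀ a ∈ Set.Icc (0:ℝ) a₂, ∀ x : EuclideanSpace ℝ (Fin N),
      IntegrableOn (fun y => J (x - y) * u a y) Ω := fun a ha x =>
    aux_integrableOn hΩb
      (((hJc.comp (continuous_const.sub continuous_id)).continuousOn).mul (huspace a ha))
  have hKφnn : ∀ a ∈ Set.Icc (0:ℝ) a₂, ∀ x : EuclideanSpace ℝ (Fin N),
      0 ≤ ∫ y in Ω, J (x - y) * φ a y := fun a ha x =>
    setIntegral_nonneg hΩm fun y hy => mul_nonneg (hJnn _) (hφpos a ha y (hΩsub hy)).le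
  set MK := (volume Ω).toReal * (MJ * Mφ) with hMKdef
  have hMK0 : 0 ≤ MK := mul_nonneg ENNReal.toReal_nonneg (mul_nonneg hMJ0.le hMφpos.le)
  have hKφle : ∀ a ∈ Set.Icc (0:ℝ) a₂, ∀ x : EuclideanSpace ℝ (Fin N),
      (∫ y in Ω, J (x - y) * φ a y) ≤ MK := by
    intro a ha x
    have h1 : (∫ y in Ω, J (x - y) * φ a y) ≤ ∫ _y in Ω, MJ * Mφ := by
      apply setIntegral_mono_on (hKφint a ha x)
        (integrableOn_const hvolΩ) hΩm
      intro y hy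
      exact mul_le_mul (hMJ _) (hMφ a ha y (hΩsub hy)) (hφpos a ha y (hΩsub hy)).le hMJ0.le
    rwa [setIntegral_const, smul_eq_mul] at h1
  -- integrability of β, β·u, β·φ in age at each point
  have hβpack : ∀ x ∈ closure Ω, IntegrableOn (fun a => β a x) (Set.Ioc (0:ℝ) a₂) ∧
      IntegrableOn (fun a => β a x * u a x) (Set.Ioc (0:ℝ) a₂) ∧
      IntegrableOn (fun a => β a x * φ a x) (Set.Ioc (0:ℝ) a₂) := by
    intro x hx
    have hφ0pos : 0 < φ 0 x := hφpos 0 ⟨le_rfl, ha₂.le⟩ x hx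
    have hβφ : IntegrableOn (fun a => β a x * φ a x) (Set.Ioc (0:ℝ) a₂) := by
      apply aux_integrable_of_pos
      rw [← hφbc x hx]; exact ne_of_gt hφ0pos
    have hφcont' : ContinuousOn (fun a => φ a x) (Set.Icc (0:ℝ) a₂) := hφslice x hx
    have hβaesm : AEStronglyMeasurable (fun a => β a x)
        (volume.restrict (Set.Ioc (0:ℝ) a₂)) := by
      have hinv : AEStronglyMeasurable (fun a => (φ a x)⁻¹)
          (volume.restrict (Set.Ioc (0:ℝ) a₂)) := by
        apply ContinuousOn.aestronglyMeasurable _ measurableSet_Ioc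
        exact ContinuousOn.inv₀ (hφcont'.mono Set.Ioc_subset_Icc_self)
          (fun a ha => ne_of_gt (hφpos a (Set.Ioc_subset_Icc_self ha) x hx))
      apply AEStronglyMeasurable.congr (hβφ.aestronglyMeasurable.mul hinv)
      rw [Filter.EventuallyEq, ae_restrict_iff' measurableSet_Ioc]
      refine ae_of_all _ fun a ha => ?_
      have hφne : φ a x ≠ 0 := ne_of_gt (hφpos a (Set.Ioc_subset_Icc_self ha) x hx)
      simp only [Pi.mul_apply]
      rw [mul_assoc, mul_inv_cancel₀ hφne, mul_one]
    have hβ : IntegrableOn (fun a => β a x) (Set.Ioc (0:ℝ) a₂) := by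
      refine (hβφ.div_const c₀).mono' hβaesm ?_
      rw [ae_restrict_iff' measurableSet_Ioc]
      refine ae_of_all _ fun a ha => ?_
      have haI := Set.Ioc_subset_Icc_self ha
      have h1 : β a x * c₀ ≤ β a x * φ a x :=
        mul_le_mul_of_nonneg_left (hc₀le a haI x hx) (hβnn a x)
      rw [Real.norm_eq_abs, abs_of_nonneg (hβnn a x), le_div_iff₀ hc₀pos]
      linarith
    have hβu : IntegrableOn (fun a => β a x * u a x) (Set.Ioc (0:ℝ) a₂) :=
      aux_int_mul ha₂ hβ (fun a => hβnn a x) (huslice x hx)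
    exact ⟨hβ, hβu, hβφ⟩
  -- Step 1: u ≥ 0 on Icc × closure Ω
  have hu0 : ∀ a ∈ Set.Icc (0:ℝ) a₂, ∀ x ∈ closure Ω, 0 ≤ u a x := by
    set T : Set ℝ := {ε : ℝ | 0 ≤ ε ∧ ∀ a ∈ Set.Icc (0:ℝ) a₂, ∀ x ∈ closure Ω,
      0 ≤ u a x + ε * φ a x} with hTdef
    have hTne : (Mu / c₀) ∈ T := by
      constructor
      · positivity
      · intro a ha x hx
        have h1 : -Mu ≤ u a x := neg_le_of_abs_le (hMu a ha x hx)
        have h2 : Mu ≤ (Mu / c₀) * φ a x := by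
          calc Mu = (Mu / c₀) * c₀ := by field_simp
          _ ≤ (Mu / c₀) * φ a x :=
            mul_le_mul_of_nonneg_left (hc₀le a ha x hx) (by positivity)
        linarith
    have hTbdd : BddBelow T := ⟨0, fun ε hε => hε.1⟩
    set ε₀ := sInf T with hε₀def
    have hε₀nn : 0 ≤ ε₀ := le_csInf ⟨_, hTne⟩ (fun ε hε => hε.1)
    have hw0 : ∀ a ∈ Set.Icc (0:ℝ) a₂, ∀ x ∈ closure Ω, 0 ≤ u a x + ε₀ * φ a x := by
      intro a ha x hx
      by_contra hneg
      push_neg at hneg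
      have hφp := hφpos a ha x hx
      have hle : (-(u a x)) / φ a x ≤ ε₀ := by
        apply le_csInf ⟨_, hTne⟩
        intro ε hε
        rw [div_le_iff₀ hφp]
        have := hε.2 a ha x hx
        linarith
      rw [div_le_iff₀ hφp] at hle
      linarith
    rcases eq_or_lt_of_le hε₀nn with heq | hε₀pos
    · intro a ha x hx
      have := hw0 a ha x hx
      rw [← heq] at this
      simpa using this
    · exfalso
      -- no zero of w := u + ε₀ φ in (0,a₂] × closure Ω
      have key1 : ∀ x ∈ closure Ω, ∀ a ∈ Set.Ioc (0:ℝ) a₂, 0 < u a x + ε₀ * φ a x := by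
        intro x hx a ha
        have haI : a ∈ Set.Icc (0:ℝ) a₂ := ⟨ha.1.le, ha.2⟩
        rcases lt_or_eq_of_le (hw0 a haI x hx) with h | h
        · exact h
        exfalso
        have hvd : ∀ b ∈ Set.Icc (0:ℝ) a₂, HasDerivAt (fun t => u t x + ε₀ * φ t x)
            (u' b x + ε₀ * (D * ((∫ y in Ω, J (x - y) * φ b y) - φ b x) - μ b x * φ b x
              - lam₁ * φ b x)) b :=
          fun b hb => (hud x hx b hb).add ((hφeig x hx b hb).const_mul ε₀)
        have hder := aux_left_deriv_nonpos (hvd a haI) ha.1 ha.2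
          (fun b hb => hw0 b hb x hx) h.symm
        have hIu := hKuint a haI x
        have hIφ := hKφint a haI x
        have hsplit : (∫ y in Ω, (J (x - y) * u a y + ε₀ * (J (x - y) * φ a y)))
            = (∫ y in Ω, J (x - y) * u a y) + ε₀ * ∫ y in Ω, J (x - y) * φ a y := by
          rw [integral_add hIu (hIφ.const_mul ε₀), integral_const_mul]
        have hKw : 0 ≤ (∫ y in Ω, J (x - y) * u a y)
            + ε₀ * ∫ y in Ω, J (x - y) * φ a y := by
          rw [← hsplit]
          apply setIntegral_nonneg hΩm
          intro y hy
          have h1 := hw0 a haI y (hΩsub hy)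
          have h2 : J (x - y) * u a y + ε₀ * (J (x - y) * φ a y)
              = J (x - y) * (u a y + ε₀ * φ a y) := by ring
          rw [h2]
          exact mul_nonneg (hJnn _) h1
        have hsup := hsuper a haI x hx
        have hφp := hφpos a haI x hx
        have huval : u a x = -(ε₀ * φ a x) := by linarith [h]
        have hμ := hμnn a x
        have e1 : μ a x * u a x = -(ε₀ * (μ a x * φ a x)) := by rw [huval]; ring
        have e2 : D * u a x = -(ε₀ * (D * φ a x)) := by rw [huval]; ring
        nlinarith [mul_pos (mul_pos hε₀pos (neg_pos.2 hlam₁)) hφp,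
          mul_nonneg hD.le hKw, hder, hsup, e1, e2]
      -- a zero must occur at a = 0, then the renewal condition gives a contradiction;
      -- otherwise the minimum of w is positive, contradicting minimality of ε₀
      have hwcont : ContinuousOn (fun p : ℝ × EuclideanSpace ℝ (Fin N) =>
          u p.1 p.2 + ε₀ * φ p.1 p.2) (Set.Icc (0:ℝ) a₂ ×ˢ closure Ω) :=
        hucont.add (continuousOn_const.mul hφcont)
      by_cases hzero : ∃ x ∈ closure Ω, u 0 x + ε₀ * φ 0 x = 0
      · obtain ⟨x₀, hx₀, hzx₀⟩ := hzero
        obtain ⟨hβi, hβui, hβφi⟩ := hβpack x₀ hx₀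
        have hwpos : ∀ a ∈ Set.Ioc (0:ℝ) a₂, 0 < u a x₀ + ε₀ * φ a x₀ :=
          fun a ha => key1 x₀ hx₀ a ha
        have hch1 : (∫ a in Set.Ioc (0:ℝ) a₂, (β a x₀ * u a x₀ + ε₀ * (β a x₀ * φ a x₀)))
            = (∫ a in Set.Ioc (0:ℝ) a₂, β a x₀ * u a x₀)
              + ε₀ * ∫ a in Set.Ioc (0:ℝ) a₂, β a x₀ * φ a x₀ := by
          rw [integral_add hβui (hβφi.const_mul ε₀), integral_const_mul]
        have hub := hubc x₀ hx₀
        have hφb := hφbc x₀ hx₀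
        have hβlowi : IntegrableOn βlow (Set.Ioc (0:ℝ) a₂) :=
          aux_integrable_of_pos (ne_of_gt (hβlowpos 0 ⟨le_rfl, ha₂⟩))
        have hwcont' : ContinuousOn (fun a => u a x₀ + ε₀ * φ a x₀) (Set.Icc (0:ℝ) a₂) :=
          (huslice x₀ hx₀).add (continuousOn_const.mul (hφslice x₀ hx₀))
        have hlowint := aux_int_mul ha₂ hβlowi hβlownn hwcont'
        have hβwi : IntegrableOn (fun a => β a x₀ * u a x₀ + ε₀ * (β a x₀ * φ a x₀))
            (Set.Ioc (0:ℝ) a₂) := hβui.add (hβφi.const_mul ε₀)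
        have hmono : (∫ a in Set.Ioc (0:ℝ) a₂, βlow a * (u a x₀ + ε₀ * φ a x₀))
            ≤ ∫ a in Set.Ioc (0:ℝ) a₂, (β a x₀ * u a x₀ + ε₀ * (β a x₀ * φ a x₀)) := by
          apply setIntegral_mono_on hlowint hβwi measurableSet_Ioc
          intro a ha
          have h1 := hβlow a x₀ hx₀
          have h2 := (hwpos a ha).le
          have h3 : β a x₀ * u a x₀ + ε₀ * (β a x₀ * φ a x₀)
              = β a x₀ * (u a x₀ + ε₀ * φ a x₀) := by ring
          rw [h3]
          exact mul_le_mul_of_nonneg_right h1 h2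
        have hposint : 0 < ∫ a in Set.Ioc (0:ℝ) a₂, βlow a * (u a x₀ + ε₀ * φ a x₀) :=
          aux_int_pos ha₂ hβlownn (hβlowpos 0 ⟨le_rfl, ha₂⟩) hwpos hwcont'
        have hφb' : ε₀ * φ 0 x₀ = ε₀ * ∫ a in Set.Ioc (0:ℝ) a₂, β a x₀ * φ a x₀ := by
          rw [hφb]
        rw [hch1] at hmono
        linarith
      · push_neg at hzero
        obtain ⟨q, hqK, hqmin⟩ := hKcpt.exists_isMinOn hKne hwcont
        set δ := u q.1 q.2 + ε₀ * φ q.1 q.2 with hδdef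
        have hδpos : 0 < δ := by
          rcases eq_or_lt_of_le (hw0 q.1 hqK.1 q.2 hqK.2) with h | h
          · exfalso
            rcases eq_or_lt_of_le hqK.1.1 with h0 | h0
            · rw [← h0] at h
              exact hzero q.2 hqK.2 h.symm
            · exact absurd h.symm (ne_of_gt (key1 q.2 hqK.2 q.1 ⟨h0, hqK.1.2⟩))
          · exact h
        have hM1 : (0:ℝ) < Mφ + 1 := by linarith
        set η := min (ε₀ / 2) (δ / (2 * (Mφ + 1))) with hηdef
        have hηpos : 0 < η := lt_min (by linarith) (by positivity)
        have hmem : ε₀ - η ∈ T := by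
          constructor
          · have : η ≤ ε₀ / 2 := min_le_left _ _
            linarith
          · intro a ha x hx
            have hq : δ ≤ u a x + ε₀ * φ a x :=
              hqmin (show ((a,x) : ℝ × EuclideanSpace ℝ (Fin N)) ∈ _ from ⟨ha, hx⟩)
            have hφle' := hMφ a ha x hx
            have hφge0 := (hφpos a ha x hx).le
            have hη2 : η ≤ δ / (2 * (Mφ + 1)) := min_le_right _ _
            have hmul : η * φ a x ≤ η * (Mφ + 1) :=
              mul_le_mul_of_nonneg_left (by linarith) hηpos.le
            have h3 : η * (Mφ + 1) ≤ δ / 2 := by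
              have h4 := mul_le_mul_of_nonneg_right hη2 hM1.le
              calc η * (Mφ + 1) ≤ (δ / (2 * (Mφ + 1))) * (Mφ + 1) := h4
                _ = δ / 2 := by field_simp
            nlinarith [hq, hmul, h3]
        have := csInf_le hTbdd hmem
        linarith
  -- Step 2a: backward propagation of zeros in age
  set Cc := D * MK / c₀ - lam₁ with hCc
  have hback : ∀ x ∈ closure Ω, ∀ a₀ ∈ Set.Icc (0:ℝ) a₂, u a₀ x = 0 →
      ∀ a ∈ Set.Icc (0:ℝ) a₂, a ≤ a₀ → u a x = 0 := by
    intro x hx a₀ ha₀ hz a ha hle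
    have hφne : ∀ b ∈ Set.Icc (0:ℝ) a₂, φ b x ≠ 0 := fun b hb => ne_of_gt (hφpos b hb x hx)
    have hfd : ∀ b ∈ Set.Icc (0:ℝ) a₂, HasDerivAt
        (fun t => Real.exp (Cc * t) * (u t x / φ t x))
        (Real.exp (Cc * b) * Cc * (u b x / φ b x) + Real.exp (Cc * b) *
          ((u' b x * φ b x - u b x * (D * ((∫ y in Ω, J (x - y) * φ b y) - φ b x)
            - μ b x * φ b x - lam₁ * φ b x)) / (φ b x) ^ 2)) b := by
      intro b hb
      have hexp : HasDerivAt (fun t => Real.exp (Cc * t)) (Real.exp (Cc * b) * Cc) b := by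
        simpa [mul_comm] using (((hasDerivAt_id b).const_mul Cc).exp)
      exact hexp.mul ((hud x hx b hb).div (hφeig x hx b hb) (hφne b hb))
    have hfd0 : ∀ b ∈ Set.Icc (0:ℝ) a₂, 0 ≤
        Real.exp (Cc * b) * Cc * (u b x / φ b x) + Real.exp (Cc * b) *
          ((u' b x * φ b x - u b x * (D * ((∫ y in Ω, J (x - y) * φ b y) - φ b x)
            - μ b x * φ b x - lam₁ * φ b x)) / (φ b x) ^ 2) := by
      intro b hb
      have hφvpos : 0 < φ b x := hφpos b hb x hx
      have hφvc₀ : c₀ ≤ φ b x := hc₀le b hb x hx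
      have huv0 : 0 ≤ u b x := hu0 b hb x hx
      have hKu0 : 0 ≤ ∫ y in Ω, J (x - y) * u b y :=
        setIntegral_nonneg hΩm fun y hy => mul_nonneg (hJnn _) (hu0 b hb y (hΩsub hy))
      have hKφ0 : 0 ≤ ∫ y in Ω, J (x - y) * φ b y := hKφnn b hb x
      have hKφM : (∫ y in Ω, J (x - y) * φ b y) ≤ MK := hKφle b hb x
      have hsup := hsuper b hb x hx
      have hexp0 : 0 < Real.exp (Cc * b) := Real.exp_pos _
      have hnum : 0 ≤ Cc * u b x * φ b x + (u' b x * φ b x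
          - u b x * (D * ((∫ y in Ω, J (x - y) * φ b y) - φ b x)
            - μ b x * φ b x - lam₁ * φ b x)) := by
        rw [hCc]
        have h1 : (D * (∫ y in Ω, J (x - y) * u b y) - D * u b x - μ b x * u b x) * φ b x
            ≤ u' b x * φ b x := by
          apply mul_le_mul_of_nonneg_right _ hφvpos.le
          linarith
        have h2 : D * u b x * (∫ y in Ω, J (x - y) * φ b y) ≤ D * u b x * MK :=
          mul_le_mul_of_nonneg_left hKφM (by positivity)
        have h4 : D * MK * u b x ≤ D * MK / c₀ * φ b x * u b x := by
          apply mul_le_mul_of_nonneg_right _ huv0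
          calc D * MK = D * MK / c₀ * c₀ := (div_mul_cancel₀ _ (ne_of_gt hc₀pos)).symm
            _ ≤ D * MK / c₀ * φ b x := mul_le_mul_of_nonneg_left hφvc₀ (by positivity)
        have h5 : 0 ≤ D * (∫ y in Ω, J (x - y) * u b y) * φ b x :=
          mul_nonneg (mul_nonneg hD.le hKu0) hφvpos.le
        nlinarith [h1, h2, h4, h5]
      have hrw : Real.exp (Cc * b) * Cc * (u b x / φ b x) + Real.exp (Cc * b) *
          ((u' b x * φ b x - u b x * (D * ((∫ y in Ω, J (x - y) * φ b y) - φ b x)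
            - μ b x * φ b x - lam₁ * φ b x)) / (φ b x) ^ 2)
          = Real.exp (Cc * b) * ((Cc * u b x * φ b x + (u' b x * φ b x
          - u b x * (D * ((∫ y in Ω, J (x - y) * φ b y) - φ b x)
            - μ b x * φ b x - lam₁ * φ b x))) / (φ b x) ^ 2) := by
        field_simp
      rw [hrw]
      exact mul_nonneg hexp0.le (div_nonneg hnum (by positivity))
    have hmono : MonotoneOn (fun t => Real.exp (Cc * t) * (u t x / φ t x))
        (Set.Icc (0:ℝ) a₂) := aux_mono hfd hfd0
    have h1 : Real.exp (Cc * a) * (u a x / φ a x)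
        ≤ Real.exp (Cc * a₀) * (u a₀ x / φ a₀ x) := hmono ha ha₀ hle
    rw [hz] at h1
    simp only [zero_div, mul_zero] at h1
    have hexp : 0 < Real.exp (Cc * a) := Real.exp_pos _
    have h2 : 0 ≤ u a x / φ a x := div_nonneg (hu0 a ha x hx) (hφpos a ha x hx).le
    have h3 : u a x / φ a x = 0 := by nlinarith [h1, h2, hexp]
    rcases div_eq_zero_iff.1 h3 with h | h
    · exact h
    · exact absurd h (hφne a ha)
  -- Step 2b: at a zero, the nonlocal term vanishes pointwise
  have hKzero : ∀ a₀ ∈ Set.Ioc (0:ℝ) a₂, ∀ x ∈ closure Ω, u a₀ x = 0 →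
      ∀ y ∈ Ω, J (x - y) * u a₀ y = 0 := by
    intro a₀ ha₀ x hx hz y hy
    have haI : a₀ ∈ Set.Icc (0:ℝ) a₂ := ⟨ha₀.1.le, ha₀.2⟩
    have hder := aux_left_deriv_nonpos (hud x hx a₀ haI) ha₀.1 ha₀.2
      (fun b hb => hu0 b hb x hx) hz
    have hsup := hsuper a₀ haI x hx
    rw [hz] at hsup
    have hKule : (∫ y in Ω, J (x - y) * u a₀ y) ≤ 0 := by nlinarith [hD, hsup, hder]
    have hKu0 : (∫ y in Ω, J (x - y) * u a₀ y) = 0 :=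
      le_antisymm hKule (setIntegral_nonneg hΩm fun z hzΩ =>
        mul_nonneg (hJnn _) (hu0 a₀ haI z (hΩsub hzΩ)))
    by_contra hne
    have hgnn : ∀ z ∈ Ω, 0 ≤ J (x - z) * u a₀ z :=
      fun z hzΩ => mul_nonneg (hJnn _) (hu0 a₀ haI z (hΩsub hzΩ))
    have hgpos : 0 < J (x - y) * u a₀ y := lt_of_le_of_ne (hgnn y hy) (Ne.symm hne)
    have hgcont : ContinuousOn (fun z => J (x - z) * u a₀ z) Ω :=
      ((((hJc.comp (continuous_const.sub continuous_id)).continuousOn).mul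
        (huspace a₀ haI))).mono hΩsub
    have hOopen : IsOpen (Ω ∩ (fun z => J (x - z) * u a₀ z) ⁻¹' (Set.Ioi 0)) :=
      hgcont.isOpen_inter_preimage hΩo isOpen_Ioi
    have hOpos : 0 < volume (Ω ∩ (fun z => J (x - z) * u a₀ z) ⁻¹' (Set.Ioi 0)) :=
      hOopen.measure_pos volume ⟨y, hy, hgpos⟩
    have hgint : IntegrableOn (fun z => J (x - z) * u a₀ z) Ω := hKuint a₀ haI x
    have hae : (fun z => J (x - z) * u a₀ z) =ᵐ[volume.restrict Ω] 0 :=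
      (integral_eq_zero_iff_of_nonneg_ae
        ((ae_restrict_iff' hΩm).2 (ae_of_all _ hgnn)) hgint).1 hKu0
    have hnull : volume.restrict Ω {z | J (x - z) * u a₀ z ≠ 0} = 0 := by
      have := ae_iff.1 hae
      simpa using this
    have hle2 : volume (Ω ∩ (fun z => J (x - z) * u a₀ z) ⁻¹' (Set.Ioi 0))
        ≤ volume.restrict Ω {z | J (x - z) * u a₀ z ≠ 0} := by
      rw [Measure.restrict_apply' hΩm]
      apply measure_mono
      intro z hzO
      exact ⟨ne_of_gt hzO.2, hzO.1⟩
    rw [hnull] at hle2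
    exact absurd (le_antisymm hle2 zero_le) (ne_of_gt hOpos)
  -- J is positive near 0
  obtain ⟨ρ, hρpos, hρ⟩ : ∃ ρ > 0, ∀ z : EuclideanSpace ℝ (Fin N), ‖z‖ < ρ → 0 < J z := by
    have hJopen : IsOpen (J ⁻¹' Set.Ioi 0) := isOpen_Ioi.preimage hJc
    obtain ⟨ρ, hρpos, hball⟩ := Metric.isOpen_iff.1 hJopen 0 hJ0
    exact ⟨ρ, hρpos, fun z hz => hball (by simpa [mem_ball_zero_iff] using hz)⟩
  -- Step 2c: spatial propagation of zeros
  have hspace : ∀ a₀ ∈ Set.Ioc (0:ℝ) a₂, ∀ x₀ ∈ Ω, u a₀ x₀ = 0 → ∀ x ∈ Ω, u a₀ x = 0 := by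
    intro a₀ ha₀ x₀ hx₀ hz x hx
    by_contra hne
    have haI : a₀ ∈ Set.Icc (0:ℝ) a₂ := ⟨ha₀.1.le, ha₀.2⟩
    set U := ⋃ z ∈ {z | z ∈ Ω ∧ u a₀ z = 0}, Metric.ball z ρ with hU
    have hUopen : IsOpen U := isOpen_biUnion fun _ _ => Metric.isOpen_ball
    set V := Ω ∩ (fun z => u a₀ z) ⁻¹' ({0}ᶜ) with hV
    have hVopen : IsOpen V :=
      ((huspace a₀ haI).mono hΩsub).isOpen_inter_preimage hΩo (isOpen_compl_singleton)
    have hUV : ∀ z ∈ Ω, z ∈ U → z ∈ V → False := by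
      intro z hzΩ hzU hzV
      obtain ⟨w, hwZ, hwball⟩ := Set.mem_iUnion₂.1 hzU
      have hnorm : ‖w - z‖ < ρ := by
        rw [← dist_eq_norm, dist_comm]
        exact hwball
      have hJw : 0 < J (w - z) := hρ _ hnorm
      have hprod := hKzero a₀ ha₀ w (hΩsub hwZ.1) hwZ.2 z hzΩ
      have huz : u a₀ z ≠ 0 := hzV.2
      rcases mul_eq_zero.1 hprod with h | h
      · exact absurd h (ne_of_gt hJw)
      · exact huz h
    have hcover : Ω ⊆ U ∪ V := by
      intro z hz'
      by_cases h : u a₀ z = 0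
      · exact Or.inl (Set.mem_biUnion (show z ∈ {z | z ∈ Ω ∧ u a₀ z = 0} from ⟨hz', h⟩)
          (Metric.mem_ball_self hρpos))
      · exact Or.inr ⟨hz', h⟩
    obtain ⟨p, hpΩ, hpUV⟩ : (Ω ∩ (U ∩ V)).Nonempty :=
      hΩconn.isPreconnected U V hUopen hVopen hcover
        ⟨x₀, hx₀, Set.mem_biUnion (show x₀ ∈ {z | z ∈ Ω ∧ u a₀ z = 0} from ⟨hx₀, hz⟩)
          (Metric.mem_ball_self hρpos)⟩
        ⟨x, hx, hx, hne⟩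
    exact hUV p hpΩ hpUV.1 hpUV.2
  -- Final assembly
  intro a ha x hx
  rcases lt_or_eq_of_le (hu0 a ha x (hΩsub hx)) with h | h
  · exact h
  exfalso
  have hz : u a x = 0 := h.symm
  have hustar : 0 < u astar xstar :=
    lt_of_le_of_ne (hu0 astar hastar xstar (hΩsub hxstarΩ)) (Ne.symm hustar_ne)
  have hβlowi : IntegrableOn βlow (Set.Ioc (0:ℝ) a₂) :=
    aux_integrable_of_pos (ne_of_gt (hβlowpos 0 ⟨le_rfl, ha₂⟩))
  -- produce a zero at some positive age somewhere in Ω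
  have hzero1 : ∃ a₁ ∈ Set.Ioc (0:ℝ) a₂, ∃ x₁ ∈ Ω, u a₁ x₁ = 0 := by
    rcases eq_or_lt_of_le ha.1 with h0 | h0
    · by_contra hno
      push_neg at hno
      have hupos : ∀ b ∈ Set.Ioc (0:ℝ) a₂, 0 < u b x := by
        intro b hb
        rcases lt_or_eq_of_le (hu0 b ⟨hb.1.le, hb.2⟩ x (hΩsub hx)) with h' | h'
        · exact h'
        · exact absurd h'.symm (hno b hb x hx)
      obtain ⟨hβi, hβui, hβφi⟩ := hβpack x (hΩsub hx)
      have hlow := aux_int_pos ha₂ hβlownn (hβlowpos 0 ⟨le_rfl, ha₂⟩) hupos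
        (huslice x (hΩsub hx))
      have hlowint := aux_int_mul ha₂ hβlowi hβlownn (huslice x (hΩsub hx))
      have hmono : (∫ b in Set.Ioc (0:ℝ) a₂, βlow b * u b x)
          ≤ ∫ b in Set.Ioc (0:ℝ) a₂, β b x * u b x := by
        apply setIntegral_mono_on hlowint hβui measurableSet_Ioc
        intro b hb
        exact mul_le_mul_of_nonneg_right (hβlow b x (hΩsub hx)) (hupos b hb).le
      have hub := hubc x (hΩsub hx)
      rw [← h0] at hz
      linarith
    · exact ⟨a, ⟨h0, ha.2⟩, x, hx, hz⟩
  obtain ⟨a₁, ha₁, x₁, hx₁, hz₁⟩ := hzero1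
  have hzΩ : ∀ y ∈ Ω, u a₁ y = 0 := hspace a₁ ha₁ x₁ hx₁ hz₁
  have ha₁I : a₁ ∈ Set.Icc (0:ℝ) a₂ := ⟨ha₁.1.le, ha₁.2⟩
  have h0star : u 0 xstar = 0 :=
    hback xstar (hΩsub hxstarΩ) a₁ ha₁I (hzΩ xstar hxstarΩ) 0 ⟨le_rfl, ha₂.le⟩ ha₁.1.le
  have hfwd : ∀ b ∈ Set.Icc (0:ℝ) a₂, astar ≤ b → 0 < u b xstar := by
    intro b hb hab
    rcases lt_or_eq_of_le (hu0 b hb xstar (hΩsub hxstarΩ)) with h' | h'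
    · exact h'
    · exact absurd (hback xstar (hΩsub hxstarΩ) b hb h'.symm astar hastar hab)
        (ne_of_gt hustar)
  obtain ⟨t, ht0, hta, hpos⟩ : ∃ t, 0 ≤ t ∧ t < a₂ ∧ ∀ b ∈ Set.Ioc t a₂, 0 < u b xstar := by
    rcases lt_or_eq_of_le hastar.2 with hlt | heq
    · exact ⟨astar, hastar.1, hlt, fun b hb => hfwd b ⟨hastar.1.trans hb.1.le, hb.2⟩ hb.1.le⟩
    · have hc := (huslice xstar (hΩsub hxstarΩ)).continuousWithinAt
        (show a₂ ∈ Set.Icc (0:ℝ) a₂ from ⟨ha₂.le, le_rfl⟩)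
      have hua₂ : 0 < u a₂ xstar := by rw [← heq]; exact hustar
      have hev : (fun b => u b xstar) ⁻¹' Set.Ioi 0 ∈ 𝓝[Set.Icc (0:ℝ) a₂] a₂ :=
        hc (Ioi_mem_nhds hua₂)
      obtain ⟨O, hOopen, hOsub, hOa₂⟩ := mem_nhdsWithin.1 hev
      obtain ⟨δ, hδpos, hball⟩ := Metric.isOpen_iff.1 hOopen a₂ hOsub
      refine ⟨max (a₂ - δ/2) 0, le_max_right _ _, ?_, ?_⟩
      · apply max_lt (by linarith) ha₂
      · intro b hb
        have hb1 : a₂ - δ/2 < b := lt_of_le_of_lt (le_max_left _ _) hb.1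
        have hb0 : 0 < b := lt_of_le_of_lt (le_max_right _ _) hb.1
        have hbI : b ∈ Set.Icc (0:ℝ) a₂ := ⟨hb0.le, hb.2⟩
        have hbO : b ∈ Metric.ball a₂ δ := by
          rw [Metric.mem_ball, Real.dist_eq, abs_lt]
          constructor <;> linarith [hb.2]
        exact hOa₂ ⟨hball hbO, hbI⟩
  obtain ⟨hβi, hβui, hβφi⟩ := hβpack xstar (hΩsub hxstarΩ)
  have hlowint := aux_int_mul ha₂ hβlowi hβlownn (huslice xstar (hΩsub hxstarΩ))
  have hmono1 : (∫ b in Set.Ioc (0:ℝ) a₂, βlow b * u b xstar)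
      ≤ ∫ b in Set.Ioc (0:ℝ) a₂, β b xstar * u b xstar := by
    apply setIntegral_mono_on hlowint hβui measurableSet_Ioc
    intro b hb
    exact mul_le_mul_of_nonneg_right (hβlow b xstar (hΩsub hxstarΩ))
      (hu0 b ⟨hb.1.le, hb.2⟩ xstar (hΩsub hxstarΩ))
  have hmono2 : (∫ b in Set.Ioc t a₂, βlow b * u b xstar)
      ≤ ∫ b in Set.Ioc (0:ℝ) a₂, βlow b * u b xstar := by
    apply setIntegral_mono_set hlowint
    · rw [Filter.EventuallyLE, ae_restrict_iff' measurableSet_Ioc]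
      exact ae_of_all _ fun b hb =>
        mul_nonneg (hβlownn b) (hu0 b ⟨hb.1.le, hb.2⟩ xstar (hΩsub hxstarΩ))
    · exact (Set.Ioc_subset_Ioc ht0 le_rfl).eventuallyLE
  have hfin : 0 < ∫ b in Set.Ioc t a₂, βlow b * u b xstar :=
    aux_int_pos hta hβlownn (hβlowpos t ⟨ht0, hta⟩) hpos
      ((huslice xstar (hΩsub hxstarΩ)).mono (Set.Icc_subset_Icc ht0 le_rfl))
  have hub := hubc xstar (hΩsub hxstarΩ)
  rw [h0star] at hub
  linarith
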